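/- Let d ≥ 1 and χ be integers, and let k, r be the unique integers with χ + d(d−3)/2 = kd + r and 0 ≤ r < d. Then the deepest spectrum v(d,χ) is a balanced spectrum of type (d, χ) having at most one index j ∈ {1, …, d−1} with a_j = a_{j+1}. Moreover, if χ < g(d) and k ≥ −2, then h⁰(v(d,χ)) = (k+2)(k+1)/2 + max(0, k−d+r+2), so the upper bound of Theorem 1.1(2) is attained. -/

import Mathlib

open Finset

/-- A spectrum of type `(d, χ)`: a nonincreasing `d`-tuple of integers with
entry sum `χ - d`. -/
def IsSpectrum (d : ℕ) (χ : ℤ) (a : Fin d → ℤ) : Prop :=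
  Antitone a ∧ ∑ i, a i = χ - (d : ℤ)

/-- Balanced: consecutive entries drop by at most 1. -/
def IsBalanced {d : ℕ} (a : Fin d → ℤ) : Prop :=
  ∀ (i : Fin d) (h : (i : ℕ) + 1 < d), a i - a ⟨(i : ℕ) + 1, h⟩ ≤ 1

/-- `h⁰` of a spectrum: `Σ_{a_i ≥ 0} (a_i + 1)`. -/
def h0 {d : ℕ} (a : Fin d → ℤ) : ℤ :=
  ∑ i, if 0 ≤ a i then a i + 1 else 0

/-- Arithmetic genus of a degree `d` plane curve: `(d-1)(d-2)/2`. -/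
def gd (d : ℤ) : ℤ := (d - 1) * (d - 2) / 2

/-- The deepest spectrum `v(d,χ)` (0-indexed): `a_i = k - i` for `i + 1 ≤ d - r`
and `a_i = k + 1 - i` otherwise. -/
def deepest (d : ℕ) (k r : ℤ) : Fin d → ℤ :=
  fun i => if ((i : ℕ) : ℤ) + 1 ≤ (d : ℤ) - r then k - (i : ℕ) else k + 1 - (i : ℕ)

/-- There is at most one index `j` with `a_j = a_{j+1}`. -/
def AtMostOneRepeat {d : ℕ} (a : Fin d → ℤ) : Prop :=
  ∀ (i j : Fin d) (hi : (i : ℕ) + 1 < d) (hj : (j : ℕ) + 1 < d),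
    a i = a ⟨(i : ℕ) + 1, hi⟩ → a j = a ⟨(j : ℕ) + 1, hj⟩ → i = j

/-- Triangle sums: `Σ_{i<n} max(c-i,0) = c(c+1)/2` when `-1 ≤ c ≤ n`. -/
lemma aux_Tsum (n : ℕ) (c : ℤ) (h1 : -1 ≤ c) (h2 : c ≤ n) :
    (∑ i ∈ Finset.range n, max (c - (i:ℤ)) 0) * 2 = c * (c + 1) := by
  induction n generalizing c with
  | zero =>
    interval_cases c <;> simp
  | succ n ih =>
    rcases le_or_gt c n with h | h
    · rw [Finset.sum_range_succ, max_eq_right (by push_cast; omega)]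
      simpa using ih c h1 h
    · have hc : c = (n:ℤ) + 1 := by push_cast at h2 ⊢; omega
      have e : ∀ i ∈ Finset.range (n+1), max (c - (i:ℤ)) 0 = max ((c-1) - i) 0 + 1 := by
        intro i hi
        simp only [Finset.mem_range] at hi
        have hi' : (i:ℤ) ≤ n := by exact_mod_cast Nat.lt_succ_iff.mp hi
        rw [max_eq_left (by omega), max_eq_left (by omega)]; ring
      rw [Finset.sum_congr rfl e, Finset.sum_add_distrib, Finset.sum_const,
        Finset.card_range, Finset.sum_range_succ, max_eq_right (by omega)]
      have := ih (c-1) (by omega) (by push_cast; omega)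
      push_cast
      linear_combination this - 2 * hc

/-- The rearrangement lemma for the `h⁰` computation. -/
lemma aux_rearrange (d : ℕ) (k r : ℤ) (hd : 1 ≤ d) (hr0 : 0 ≤ r) (hrd : r < (d : ℤ)) :
    ∑ i ∈ range d,
      (if ((i:ℕ):ℤ) + 1 ≤ (d:ℤ) - r then max (k + 1 - (i:ℤ)) 0 else max (k + 2 - (i:ℤ)) 0)
    = (∑ i ∈ range (d-1), max (k + 1 - (i:ℤ)) 0) + max (k + 2 - (d:ℤ) + r) 0 := by
  set s := r.toNat with hsdef
  have hs : (s:ℤ) = r := Int.toNat_of_nonneg hr0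
  have hsd : s < d := by omega
  rcases Nat.eq_zero_or_pos s with h0s | h0s
  · have hall : ∀ i ∈ range d,
        (if ((i:ℕ):ℤ) + 1 ≤ (d:ℤ) - r then max (k + 1 - (i:ℤ)) 0 else max (k + 2 - (i:ℤ)) 0)
        = max (k + 1 - (i:ℤ)) 0 := by
      intro i hi; rw [if_pos]; simp only [Finset.mem_range] at hi; omega
    rw [Finset.sum_congr rfl hall]
    have hd1 : d = (d-1) + 1 := by omega
    rw [hd1, Finset.sum_range_succ]
    congr 1
    congr 1
    omega
  · have hA : ∑ i ∈ range d,
        (if ((i:ℕ):ℤ) + 1 ≤ (d:ℤ) - r then max (k + 1 - (i:ℤ)) 0 else max (k + 2 - (i:ℤ)) 0)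
        = (∑ i ∈ range (d-s), max (k + 1 - (i:ℤ)) 0)
          + ∑ j ∈ range s, max (k + 1 - ((d-s-1+j : ℕ):ℤ)) 0 := by
      rw [(show range d = Ico 0 d from Finset.range_eq_Ico d),
        ← Finset.sum_Ico_consecutive _ (Nat.zero_le (d-s)) (show d - s ≤ d by omega)]
      congr 1
      · rw [← Finset.range_eq_Ico]
        refine Finset.sum_congr rfl fun i hi => ?_
        rw [if_pos]; simp only [Finset.mem_range] at hi; omega
      · rw [Finset.sum_Ico_eq_sum_range, show d - (d - s) = s from by omega]
        refine Finset.sum_congr rfl fun j hj => ?_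
        simp only [Finset.mem_range] at hj
        rw [if_neg (by omega)]
        congr 1
        omega
    rw [hA]
    have h1 : ∑ i ∈ Ico (d-s-1) (d-1), max (k + 1 - (i:ℤ)) 0
        = ∑ j ∈ range s, max (k + 1 - ((d-s-1+j : ℕ):ℤ)) 0 := by
      rw [Finset.sum_Ico_eq_sum_range, show d - 1 - (d - s - 1) = s from by omega]
    have hsplit : (∑ i ∈ range (d-s-1), max (k + 1 - (i:ℤ)) 0)
          + ∑ j ∈ range s, max (k + 1 - ((d-s-1+j : ℕ):ℤ)) 0
        = ∑ i ∈ range (d-1), max (k + 1 - (i:ℤ)) 0 := by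
      rw [← h1, (show range (d-s-1) = Ico 0 (d-s-1) from Finset.range_eq_Ico _),
        (show range (d-1) = Ico 0 (d-1) from Finset.range_eq_Ico _)]
      exact Finset.sum_Ico_consecutive _ (Nat.zero_le _) (by omega)
    rw [← hsplit]
    have hA2 : ∑ i ∈ range (d-s), max (k + 1 - (i:ℤ)) 0
        = (∑ i ∈ range (d-s-1), max (k + 1 - (i:ℤ)) 0) + max (k + 2 - (d:ℤ) + r) 0 := by
      rw [show d - s = (d-s-1) + 1 from by omega, Finset.sum_range_succ]
      congr 1
      congr 1
      omega
    rw [hA2]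
    ring

/-- the deepest spectrum is a balanced spectrum of type `(d, χ)` with
at most one repeated adjacent pair, and if `χ < g(d)` and `k ≥ -2` it attains the
bound of Theorem 1.1(2). -/
theorem stmt_2 (d : ℕ) (χ k r : ℤ) (hd : 1 ≤ d)
    (hkr : χ + (d : ℤ) * ((d : ℤ) - 3) / 2 = k * (d : ℤ) + r)
    (hr0 : 0 ≤ r) (hrd : r < (d : ℤ)) :
    IsSpectrum d χ (deepest d k r) ∧ IsBalanced (deepest d k r) ∧
    AtMostOneRepeat (deepest d k r) ∧
    (χ < gd (d : ℤ) → -2 ≤ k →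
      h0 (deepest d k r) = (k + 2) * (k + 1) / 2 + max 0 (k - (d : ℤ) + r + 2)) := by
  obtain ⟨m, hm⟩ : ∃ m : ℤ, ((d:ℤ)-1)*((d:ℤ)-2) = 2*m := by
    obtain ⟨m, hm⟩ := Int.even_mul_succ_self ((d:ℤ)-2)
    exact ⟨m, by linarith [hm]⟩
  have hd3 : (d:ℤ)*((d:ℤ)-3) = 2*(m-1) := by linarith [hm]
  have hkr' : χ + (m-1) = k * d + r := by
    rw [hd3, Int.mul_ediv_cancel_left _ (by norm_num)] at hkr
    exact hkr
  refine ⟨⟨?_, ?_⟩, ?_, ?_, ?_⟩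
  · -- Antitone
    intro i j hij
    have h1 : (i:ℕ) ≤ (j:ℕ) := hij
    simp only [deepest]
    split_ifs <;> omega
  · -- sum
    simp only [deepest]
    rw [Fin.sum_univ_eq_sum_range (fun n : ℕ =>
      if (n:ℤ) + 1 ≤ (d:ℤ) - r then k - (n:ℤ) else k + 1 - (n:ℤ)) d]
    have gauss : (∑ i ∈ range d, (i:ℤ)) * 2 = (d:ℤ) * ((d:ℤ)-1) := by
      have := congrArg (Nat.cast : ℕ → ℤ) (Finset.sum_range_id_mul_two d)
      push_cast [Nat.cast_sub hd] at this
      linarith [this]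
    have e : ∀ i ∈ range d, (if ((i:ℕ):ℤ) + 1 ≤ (d:ℤ) - r then k - (i:ℕ) else k + 1 - (i:ℕ))
        = (k - (i:ℕ)) + (if ¬(((i:ℕ):ℤ) + 1 ≤ (d:ℤ) - r) then 1 else 0) := by
      intro i _; split_ifs <;> simp_all <;> ring
    rw [Finset.sum_congr rfl e, Finset.sum_add_distrib, Finset.sum_boole]
    have hfil : (range d).filter (fun i => ¬(((i:ℕ):ℤ) + 1 ≤ (d:ℤ) - r)) = Ico (d - r.toNat) d := by
      ext i
      simp only [Finset.mem_filter, Finset.mem_range, Finset.mem_Ico, not_le]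
      omega
    rw [hfil, Nat.card_Ico]
    have hsub : ((d - (d - r.toNat) : ℕ) : ℤ) = r := by omega
    rw [hsub, Finset.sum_sub_distrib, Finset.sum_const, Finset.card_range]
    simp only [nsmul_eq_mul]
    linarith [gauss, hkr', hd3]
  · -- balanced
    intro i h
    simp only [deepest]
    split_ifs <;> omega
  · -- at most one repeat
    intro i j hi hj h1 h2
    simp only [deepest] at h1 h2
    split_ifs at h1 h2 <;> exact Fin.ext (by omega)
  · -- h0
    intro hχ hk
    have hgd : gd (d:ℤ) = m := by
      unfold gd
      rw [hm, Int.mul_ediv_cancel_left _ (by norm_num)]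
    have hχm : χ ≤ m - 1 := by rw [hgd] at hχ; omega
    have hkd : k * d ≤ ((d:ℤ) - 3) * d := by nlinarith [hkr', hd3, hχm, hr0]
    have hk3 : k ≤ (d:ℤ) - 3 :=
      le_of_mul_le_mul_right hkd (by exact_mod_cast hd)
    have step1 : h0 (deepest d k r) = ∑ i ∈ range d,
        (if ((i:ℕ):ℤ) + 1 ≤ (d:ℤ) - r then max (k + 1 - (i:ℤ)) 0 else max (k + 2 - (i:ℤ)) 0) := by
      simp only [h0, deepest]
      refine (Fin.sum_univ_eq_sum_range (fun n : ℕ =>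
        if 0 ≤ (if (n:ℤ) + 1 ≤ (d:ℤ) - r then k - (n:ℤ) else k + 1 - (n:ℤ)) then
          (if (n:ℤ) + 1 ≤ (d:ℤ) - r then k - (n:ℤ) else k + 1 - (n:ℤ)) + 1 else 0) d).trans ?_
      refine Finset.sum_congr rfl fun i _ => ?_
      simp only [max_def]
      split_ifs <;> omega
    rw [step1, aux_rearrange d k r hd hr0 hrd]
    have T2 := aux_Tsum (d-1) (k+1) (by omega) (by omega)
    have hSdiv : (k+2)*(k+1)/2 = ∑ i ∈ range (d-1), max (k + 1 - (i:ℤ)) 0 :=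
      Int.ediv_eq_of_eq_mul_left two_ne_zero (by linear_combination -T2)
    rw [hSdiv, show k + 2 - (d:ℤ) + r = k - (d:ℤ) + r + 2 from by ring, max_comm]
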